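/- For every field F, all integers d ≥ 2 and 2 ≤ m ≤ d, every vector ψ ∈ F^d with ψ_d ≠ 0, and every m−1-element subset I of {1,…,d} with d ∈ I, letting J = I \ {d}, the column of Ξ^{ψ,m} indexed by I satisfies: Ξ^{ψ,m}_{•,I} = (−1)^m ψ_d^{−1} · Σ_{y ∈ {1,…,d−1}\J} (−1)^{ind(J∪{y}, y)} ψ_y · Ξ^{ψ,m}_{•, J∪{y}}. In particular, every column of Ξ^{ψ,m} whose index contains d is a linear combination of the columns whose indices are subsets of {1,…,d−1}. -/

import Mathlib

/-- `ind S x = |{y ∈ S : y ≤ x}|`. -/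
def ind (S : Finset ℕ) (x : ℕ) : ℕ := (S.filter (fun y => y ≤ x)).card

/-- The repair-encoder matrix `Ξ^{ψ,m}`: rows indexed by `m`-element subsets `I` of `{1,…,d}`,
columns indexed by `(m-1)`-element subsets `J` of `{1,…,d}`; entry `(-1)^{ind(I,x)} ψ_x`
if `I = J ∪ {x}` (with `x ∉ J`), and `0` otherwise. -/
def Xi (F : Type*) [Field F] (d m : ℕ) (ψ : ℕ → F) :
    Matrix ↥((Finset.Icc 1 d).powersetCard m) ↥((Finset.Icc 1 d).powersetCard (m - 1)) F :=
  fun I J => ∑ x ∈ I.val \ J.val,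
    if I.val = insert x J.val then (-1 : F) ^ (ind I.val x) * ψ x else 0

lemma ind_insert_of_le {a x : ℕ} (K : Finset ℕ) (ha : a ∉ K) (h : a ≤ x) :
    ind (insert a K) x = ind K x + 1 := by
  unfold ind
  rw [Finset.filter_insert, if_pos h,
    Finset.card_insert_of_notMem (fun hm => ha (Finset.mem_of_mem_filter a hm))]

lemma ind_insert_of_gt {a x : ℕ} (K : Finset ℕ) (h : x < a) :
    ind (insert a K) x = ind K x := by
  unfold ind
  rw [Finset.filter_insert, if_neg (by omega)]

/-- Evaluation of an entry of `Xi`. -/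
lemma Xi_eq (F : Type*) [Field F] (d m : ℕ) (ψ : ℕ → F) (hm : 1 ≤ m)
    (R : ↥((Finset.Icc 1 d).powersetCard m))
    (K : ↥((Finset.Icc 1 d).powersetCard (m - 1))) :
    Xi F d m ψ R K =
      if K.val ⊆ R.val then ∑ x ∈ R.val \ K.val, (-1 : F) ^ (ind R.val x) * ψ x else 0 := by
  have hRcard : R.val.card = m := (Finset.mem_powersetCard.1 R.property).2
  have hKcard : K.val.card = m - 1 := (Finset.mem_powersetCard.1 K.property).2
  unfold Xi
  split_ifs with h
  · refine Finset.sum_congr rfl fun x hx => ?_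
    rw [Finset.mem_sdiff] at hx
    have hins : insert x K.val ⊆ R.val := Finset.insert_subset hx.1 h
    have hcard : m ≤ (insert x K.val).card := by
      rw [Finset.card_insert_of_notMem hx.2, hKcard]; omega
    rw [if_pos ((Finset.eq_of_subset_of_card_le hins (by rw [hRcard]; exact hcard)).symm)]
  · refine Finset.sum_eq_zero fun x hx => ?_
    rw [if_neg]
    intro he
    exact h (by rw [he]; exact (Finset.subset_insert x K.val))

lemma pair_union (x y : ℕ) (s : Finset ℕ) :
    ({x, y} : Finset ℕ) ∪ s = insert x (insert y s) := by
  ext z; simp [or_assoc]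

lemma pair_cancel (F : Type*) [Field F] (ψ : ℕ → F) (J R : Finset ℕ) (a b : ℕ)
    (hab : a < b) (ha : a ∉ J) (_hb : b ∉ J) (hR : R = insert a (insert b J)) :
    (-1:F)^(ind (insert a J) a) * ψ a * ((-1:F)^(ind R b) * ψ b)
      + (-1:F)^(ind (insert b J) b) * ψ b * ((-1:F)^(ind R a) * ψ a) = 0 := by
  have h1 : ind R b = ind (insert b J) b + 1 := by
    rw [hR]
    exact ind_insert_of_le _ (by simp [Finset.mem_insert, ha, hab.ne]) hab.le
  have h2 : ind R a = ind (insert a J) a := by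
    rw [hR, Finset.insert_comm]
    exact ind_insert_of_gt _ hab
  rw [h1, h2, pow_succ]
  ring

theorem xi_column_with_d_is_combination (F : Type*) [Field F] (d m : ℕ) (hd : 2 ≤ d)
    (hm : 2 ≤ m) (hmd : m ≤ d) (ψ : ℕ → F) (hψd : ψ d ≠ 0)
    (I : Finset ℕ) (hIsub : I ⊆ Finset.Icc 1 d) (hIcard : I.card = m - 1) (hdI : d ∈ I) :
    ∀ R : ↥((Finset.Icc 1 d).powersetCard m),
      Xi F d m ψ R ⟨I, by rw [Finset.mem_powersetCard]; exact ⟨hIsub, hIcard⟩⟩ =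
        (-1 : F) ^ m * (ψ d)⁻¹ *
          ∑ y ∈ (Finset.Icc 1 (d - 1) \ (I.erase d)).attach,
            (-1 : F) ^ (ind (insert y.val (I.erase d)) y.val) * ψ y.val *
              Xi F d m ψ R ⟨insert y.val (I.erase d), by
                have hy := y.property
                rw [Finset.mem_sdiff] at hy
                have hysub : y.val ∈ Finset.Icc 1 d := by
                  have := hy.1
                  rw [Finset.mem_Icc] at this ⊢
                  omega
                rw [Finset.mem_powersetCard]
                refine ⟨Finset.insert_subset hysub
                  ((Finset.erase_subset _ _).trans hIsub), ?_⟩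
                rw [Finset.card_insert_of_notMem hy.2, Finset.card_erase_of_mem hdI, hIcard]
                omega⟩ := by
  intro R
  set J : Finset ℕ := I.erase d with hJdef
  have hRsub : R.val ⊆ Finset.Icc 1 d := (Finset.mem_powersetCard.1 R.property).1
  have hRcard : R.val.card = m := (Finset.mem_powersetCard.1 R.property).2
  have hdJ : d ∉ J := Finset.notMem_erase d I
  have hJI : insert d J = I := Finset.insert_erase hdI
  have hJsubI : J ⊆ I := Finset.erase_subset d I
  have hJcard : J.card = m - 2 := by
    rw [hJdef, Finset.card_erase_of_mem hdI, hIcard]; omega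
  simp only [Xi_eq F d m ψ (by omega : 1 ≤ m)]
  rw [Finset.sum_attach (Finset.Icc 1 (d - 1) \ J)
    (fun z => (-1 : F) ^ (ind (insert z J) z) * ψ z *
      (if insert z J ⊆ R.val then
        ∑ x ∈ R.val \ insert z J, (-1 : F) ^ (ind R.val x) * ψ x else 0))]
  by_cases hJR : J ⊆ R.val
  · -- J ⊆ R
    have hcard2 : (R.val \ J).card = 2 := by
      rw [Finset.card_sdiff_of_subset hJR, hRcard, hJcard]; omega
    obtain ⟨a, b, hab, hRJ⟩ := Finset.card_eq_two.1 hcard2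
    have haRJ : a ∈ R.val ∧ a ∉ J := by
      have : a ∈ R.val \ J := by rw [hRJ]; exact Finset.mem_insert_self a {b}
      exact Finset.mem_sdiff.1 this
    have hbRJ : b ∈ R.val ∧ b ∉ J := by
      have : b ∈ R.val \ J := by
        rw [hRJ]; exact Finset.mem_insert_of_mem (Finset.mem_singleton_self b)
      exact Finset.mem_sdiff.1 this
    have hReq : R.val = insert a (insert b J) := by
      rw [← Finset.sdiff_union_of_subset hJR, hRJ, pair_union]
    by_cases hdR : d ∈ R.val
    · -- d ∈ R : the column indexed by I "survives"
      have hd2 : d = a ∨ d = b := by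
        have : d ∈ ({a, b} : Finset ℕ) := by
          rw [← hRJ]; exact Finset.mem_sdiff.2 ⟨hdR, hdJ⟩
        simpa using this
      obtain ⟨x₀, hx0ne, hRJ', hx0R, hx0J⟩ :
          ∃ x₀, x₀ ≠ d ∧ R.val \ J = {x₀, d} ∧ x₀ ∈ R.val ∧ x₀ ∉ J := by
        rcases hd2 with h | h
        · exact ⟨b, by omega, by rw [hRJ, ← h, Finset.pair_comm], hbRJ.1, hbRJ.2⟩
        · exact ⟨a, by omega, by rw [hRJ, ← h], haRJ.1, haRJ.2⟩
      have hx0d : x₀ < d := by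
        have := Finset.mem_Icc.1 (hRsub hx0R)
        omega
      have hx0S : x₀ ∈ Finset.Icc 1 (d - 1) \ J := by
        rw [Finset.mem_sdiff, Finset.mem_Icc]
        have := Finset.mem_Icc.1 (hRsub hx0R)
        exact ⟨⟨this.1, by omega⟩, hx0J⟩
      have hISR : I ⊆ R.val := by
        rw [← hJI]; exact Finset.insert_subset hdR hJR
      rw [if_pos hISR]
      have hRI : R.val \ I = {x₀} := by
        rw [← hJI, Finset.sdiff_insert, hRJ', Finset.pair_comm,
          Finset.erase_insert (by simp [Ne.symm hx0ne])]
      rw [hRI, Finset.sum_singleton]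
      rw [Finset.sum_eq_single_of_mem x₀ hx0S (fun y hy hyne => by
        rw [Finset.mem_sdiff, Finset.mem_Icc] at hy
        rw [if_neg, mul_zero]
        intro hsub
        have hyR : y ∈ R.val := hsub (Finset.mem_insert_self y J)
        have : y ∈ ({x₀, d} : Finset ℕ) := by
          rw [← hRJ']; exact Finset.mem_sdiff.2 ⟨hyR, hy.2⟩
        simp only [Finset.mem_insert, Finset.mem_singleton] at this
        omega)]
      rw [if_pos (Finset.insert_subset hx0R hJR)]
      have hRx0 : R.val \ insert x₀ J = {d} := by
        rw [Finset.sdiff_insert, hRJ', Finset.erase_insert (by simp [hx0ne])]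
      rw [hRx0, Finset.sum_singleton]
      have hindd : ind R.val d = m := by
        unfold ind
        rw [Finset.filter_true_of_mem (fun x hx => (Finset.mem_Icc.1 (hRsub hx)).2), hRcard]
      have hindx : ind R.val x₀ = ind (insert x₀ J) x₀ := by
        have : R.val = insert d (insert x₀ J) := by
          rw [← Finset.sdiff_union_of_subset hJR, hRJ', pair_union, Finset.insert_comm]
        rw [this]
        exact ind_insert_of_gt _ hx0d
      rw [hindd, hindx]
      have h1 : (-1 : F) ^ m * (-1 : F) ^ m = 1 := by
        rw [← pow_add]; exact Even.neg_one_pow ⟨m, by ring⟩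
      have h2 : (ψ d)⁻¹ * ψ d = 1 := inv_mul_cancel₀ hψd
      rw [show (-1 : F) ^ m * (ψ d)⁻¹ *
          ((-1 : F) ^ ind (insert x₀ J) x₀ * ψ x₀ * ((-1 : F) ^ m * ψ d)) =
          ((-1 : F) ^ m * (-1 : F) ^ m) * ((ψ d)⁻¹ * ψ d) *
            ((-1 : F) ^ ind (insert x₀ J) x₀ * ψ x₀) from by ring, h1, h2, one_mul, one_mul]
    · -- d ∉ R : both sides vanish
      rw [if_neg (fun h => hdR (h hdI))]
      have hadne : a ≠ d := fun h => hdR (h ▸ haRJ.1)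
      have hbdne : b ≠ d := fun h => hdR (h ▸ hbRJ.1)
      have hsub : ({a, b} : Finset ℕ) ⊆ Finset.Icc 1 (d - 1) \ J := by
        intro y hy
        simp only [Finset.mem_insert, Finset.mem_singleton] at hy
        rw [Finset.mem_sdiff, Finset.mem_Icc]
        rcases hy with h | h <;> subst h
        · have := Finset.mem_Icc.1 (hRsub haRJ.1); exact ⟨⟨this.1, by omega⟩, haRJ.2⟩
        · have := Finset.mem_Icc.1 (hRsub hbRJ.1); exact ⟨⟨this.1, by omega⟩, hbRJ.2⟩
      rw [← Finset.sum_subset hsub (fun y hy hyab => by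
        rw [Finset.mem_sdiff] at hy
        rw [if_neg, mul_zero]
        intro hsub'
        have hyR : y ∈ R.val := hsub' (Finset.mem_insert_self y J)
        have : y ∈ ({a, b} : Finset ℕ) := by
          rw [← hRJ]; exact Finset.mem_sdiff.2 ⟨hyR, hy.2⟩
        exact hyab this)]
      rw [Finset.sum_pair hab]
      rw [if_pos (Finset.insert_subset haRJ.1 hJR),
        if_pos (Finset.insert_subset hbRJ.1 hJR)]
      have hRa : R.val \ insert a J = {b} := by
        rw [Finset.sdiff_insert, hRJ, Finset.erase_insert (by simp [hab])]
      have hRb : R.val \ insert b J = {a} := by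
        rw [Finset.sdiff_insert, hRJ, Finset.pair_comm,
          Finset.erase_insert (by simp [Ne.symm hab])]
      rw [hRa, hRb, Finset.sum_singleton, Finset.sum_singleton]
      rcases lt_or_gt_of_ne hab with h | h
      · rw [pair_cancel F ψ J R.val a b h haRJ.2 hbRJ.2 hReq, mul_zero]
      · rw [add_comm, pair_cancel F ψ J R.val b a h hbRJ.2 haRJ.2
          (by rw [hReq, Finset.insert_comm]), mul_zero]
  · -- J ⊄ R : both sides vanish
    rw [if_neg (fun h => hJR (hJsubI.trans h))]
    rw [Finset.sum_eq_zero (fun y hy => by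
      rw [if_neg (fun h => hJR ((Finset.subset_insert y J).trans h)), mul_zero]), mul_zero]
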